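/- arXiv:1402.2546 — 5 statements merged into one kernel-verified Lean document; each statement's English description precedes it below -/
import Mathlib

section
/- Let $d_N \ge 1$ be an integer, let $0 < |r| < 1$ with $r s_{N_n} > 0$, let $m_1, m_2 > 0$, and suppose $F : [-1,1] \to \mathbb{R}$ is twice continuously differentiable with $F(\pm 1) = 0$, $F'(-1) = 2(1-r)^{d_N}/m_2 > 0$, $F'(1) = -2(1+r)^{d_N}/m_1 < 0$, and suppose $F''(\mathfrak{z}) = (2 d_N s_{N_n} r - k(1 + r\mathfrak{z}))(1 + r\mathfrak{z})^{d_N - 1}$ for some constant $k$. Then $F(\mathfrak{z}) > 0$ for all $\mathfrak{z} \in (-1,1)$. -/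
open Set Filter Topology

lemma aux_pos_near_one {F : ℝ → ℝ} (hF1 : F 1 = 0) (hd : DifferentiableAt ℝ F 1)
    (hneg : deriv F 1 < 0) {z : ℝ} (hz : z < 1) : ∃ q, z < q ∧ q < 1 ∧ 0 < F q := by
  have h := hasDerivAt_iff_tendsto_slope.mp hd.hasDerivAt
  have hev : ∀ᶠ x in 𝓝[≠] (1:ℝ), slope F 1 x < 0 :=
    h.eventually (eventually_lt_nhds hneg)
  have hle : 𝓝[<] (1:ℝ) ≤ 𝓝[≠] (1:ℝ) :=
    nhdsWithin_mono _ (fun x hx => ne_of_lt hx)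
  have hev' : ∀ᶠ x in 𝓝[<] (1:ℝ), slope F 1 x < 0 := hev.filter_mono hle
  have hmem : Ioo z 1 ∈ 𝓝[<] (1:ℝ) := Ioo_mem_nhdsLT_of_mem (by constructor <;> linarith)
  rcases (hev'.and (eventually_of_mem hmem (fun x hx => hx))).exists with ⟨q, hq1, hq2⟩
  refine ⟨q, hq2.1, hq2.2, ?_⟩
  have hs : (F q - F 1) / (q - 1) < 0 := by rw [slope_def_field] at hq1; exact hq1
  rw [hF1, sub_zero] at hs
  have hq1' : q - 1 < 0 := by linarith [hq2.2]
  rcases div_neg_iff.mp hs with ⟨h1, h2⟩ | ⟨h1, h2⟩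
  · linarith
  · linarith

lemma aux_pos_near_neg_one {F : ℝ → ℝ} (hFm1 : F (-1) = 0) (hd : DifferentiableAt ℝ F (-1))
    (hpos : 0 < deriv F (-1)) {z : ℝ} (hz : -1 < z) : ∃ p, -1 < p ∧ p < z ∧ 0 < F p := by
  have h := hasDerivAt_iff_tendsto_slope.mp hd.hasDerivAt
  have hev : ∀ᶠ x in 𝓝[≠] (-1:ℝ), 0 < slope F (-1) x :=
    h.eventually (eventually_gt_nhds hpos)
  have hle : 𝓝[>] (-1:ℝ) ≤ 𝓝[≠] (-1:ℝ) :=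
    nhdsWithin_mono _ (fun x hx => ne_of_gt hx)
  have hev' : ∀ᶠ x in 𝓝[>] (-1:ℝ), 0 < slope F (-1) x := hev.filter_mono hle
  have hmem : Ioo (-1) z ∈ 𝓝[>] (-1:ℝ) := Ioo_mem_nhdsGT_of_mem (by constructor <;> linarith)
  rcases (hev'.and (eventually_of_mem hmem (fun x hx => hx))).exists with ⟨p, hp1, hp2⟩
  refine ⟨p, hp2.1, hp2.2, ?_⟩
  have hs : 0 < (F p - F (-1)) / (p - (-1)) := by rw [slope_def_field] at hp1; exact hp1
  rw [hFm1, sub_zero] at hs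
  have hp1' : 0 < p - (-1) := by linarith [hp2.1]
  rcases div_pos_iff.mp hs with ⟨h1, h2⟩ | ⟨h1, h2⟩
  · linarith
  · linarith

/-- Convex on `[c,1]`, vanishing at `1`, positive points arbitrarily close to `1`:
then positive on `[c,1)`. -/
lemma aux_right_convex {F : ℝ → ℝ} {c : ℝ} (hconv : ConvexOn ℝ (Icc c 1) F)
    (hF1 : F 1 = 0) (hq : ∀ z < (1:ℝ), ∃ q, z < q ∧ q < 1 ∧ 0 < F q) :
    ∀ z ∈ Ico c 1, 0 < F z := by
  intro z hz
  obtain ⟨q, hzq, hq1, hFq⟩ := hq z hz.2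
  set lam : ℝ := (1 - q) / (1 - z) with hlam
  set mu : ℝ := (q - z) / (1 - z) with hmu
  have hz1 : (0:ℝ) < 1 - z := by linarith [hz.2]
  have hlam0 : 0 < lam := div_pos (by linarith) hz1
  have hmu0 : 0 < mu := div_pos (by linarith) hz1
  have hsum : lam + mu = 1 := by rw [hlam, hmu]; field_simp <;> ring
  have hcomb : lam • z + mu • (1:ℝ) = q := by
    simp only [smul_eq_mul]; rw [hlam, hmu]; field_simp <;> ring
  have hzmem : z ∈ Icc c 1 := ⟨hz.1, le_of_lt hz.2⟩
  have h1mem : (1:ℝ) ∈ Icc c 1 := ⟨by linarith [hz.1, hz.2], le_refl 1⟩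
  have := hconv.2 hzmem h1mem (le_of_lt hlam0) (le_of_lt hmu0) hsum
  rw [hcomb, hF1] at this
  simp only [smul_eq_mul] at this
  nlinarith

lemma aux_left_convex {F : ℝ → ℝ} {c : ℝ} (hconv : ConvexOn ℝ (Icc (-1) c) F)
    (hFm1 : F (-1) = 0) (hp : ∀ z, -1 < z → ∃ p, -1 < p ∧ p < z ∧ 0 < F p) :
    ∀ z ∈ Ioc (-1 : ℝ) c, 0 < F z := by
  intro z hz
  obtain ⟨p, hp1, hpz, hFp⟩ := hp z hz.1
  set lam : ℝ := (z - p) / (z + 1) with hlam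
  set mu : ℝ := (p + 1) / (z + 1) with hmu
  have hz1 : (0:ℝ) < z + 1 := by linarith [hz.1]
  have hlam0 : 0 < lam := div_pos (by linarith) hz1
  have hmu0 : 0 < mu := div_pos (by linarith) hz1
  have hsum : lam + mu = 1 := by rw [hlam, hmu]; field_simp <;> ring
  have hcomb : lam • (-1:ℝ) + mu • z = p := by
    simp only [smul_eq_mul]; rw [hlam, hmu]; field_simp <;> ring
  have hzmem : z ∈ Icc (-1:ℝ) c := ⟨le_of_lt hz.1, hz.2⟩
  have h1mem : (-1:ℝ) ∈ Icc (-1:ℝ) c := ⟨le_refl _, by linarith [hz.1, hz.2]⟩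
  have := hconv.2 h1mem hzmem (le_of_lt hlam0) (le_of_lt hmu0) hsum
  rw [hcomb, hFm1] at this
  simp only [smul_eq_mul] at this
  nlinarith

/-- Concave on `[c,1]` with `F c > 0` and `F 1 = 0`: positive on `[c,1)`. -/
lemma aux_right_concave {F : ℝ → ℝ} {c : ℝ} (hconc : ConcaveOn ℝ (Icc c 1) F)
    (hFc : 0 < F c) (hF1 : F 1 = 0) : ∀ z ∈ Ico c 1, 0 < F z := by
  intro z hz
  rcases eq_or_lt_of_le hz.1 with h | h
  · rwa [← h]
  set lam : ℝ := (1 - z) / (1 - c) with hlam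
  set mu : ℝ := (z - c) / (1 - c) with hmu
  have hc1 : (0:ℝ) < 1 - c := by linarith [hz.2]
  have hlam0 : 0 < lam := div_pos (by linarith [hz.2]) hc1
  have hmu0 : 0 < mu := div_pos (by linarith) hc1
  have hsum : lam + mu = 1 := by rw [hlam, hmu]; field_simp <;> ring
  have hcomb : lam • c + mu • (1:ℝ) = z := by
    simp only [smul_eq_mul]; rw [hlam, hmu]; field_simp <;> ring
  have hcmem : c ∈ Icc c 1 := ⟨le_refl _, by linarith [hz.2]⟩
  have h1mem : (1:ℝ) ∈ Icc c 1 := ⟨by linarith [hz.2], le_refl 1⟩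
  have := hconc.2 hcmem h1mem (le_of_lt hlam0) (le_of_lt hmu0) hsum
  rw [hcomb, hF1] at this
  simp only [smul_eq_mul] at this
  nlinarith

lemma aux_left_concave {F : ℝ → ℝ} {c : ℝ} (hconc : ConcaveOn ℝ (Icc (-1) c) F)
    (hFm1 : F (-1) = 0) (hFc : 0 < F c) : ∀ z ∈ Ioc (-1:ℝ) c, 0 < F z := by
  intro z hz
  rcases eq_or_lt_of_le hz.2 with h | h
  · rwa [h]
  set lam : ℝ := (c - z) / (c + 1) with hlam
  set mu : ℝ := (z + 1) / (c + 1) with hmu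
  have hc1 : (0:ℝ) < c + 1 := by linarith [hz.1]
  have hlam0 : 0 < lam := div_pos (by linarith) hc1
  have hmu0 : 0 < mu := div_pos (by linarith [hz.1]) hc1
  have hsum : lam + mu = 1 := by rw [hlam, hmu]; field_simp <;> ring
  have hcomb : lam • (-1:ℝ) + mu • c = z := by
    simp only [smul_eq_mul]; rw [hlam, hmu]; field_simp <;> ring
  have hm1mem : (-1:ℝ) ∈ Icc (-1:ℝ) c := ⟨le_refl _, by linarith [hz.1, hz.2]⟩
  have hcmem : c ∈ Icc (-1:ℝ) c := ⟨by linarith [hz.1, hz.2], le_refl _⟩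
  have := hconc.2 hm1mem hcmem (le_of_lt hlam0) (le_of_lt hmu0) hsum
  rw [hcomb, hFm1] at this
  simp only [smul_eq_mul] at this
  nlinarith


lemma affine_nonpos {u v a b x : ℝ} (ha : u - v * a ≤ 0) (hb : u - v * b ≤ 0)
    (h1 : a ≤ x) (h2 : x ≤ b) : u - v * x ≤ 0 := by
  rcases eq_or_lt_of_le (h1.trans h2) with h | h
  · have hxa : x = a := le_antisymm (h ▸ h2) h1
    rw [hxa]; exact ha
  · have e1 : 0 ≤ (b - x) * (-(u - v * a)) := mul_nonneg (by linarith) (by linarith)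
    have e2 : 0 ≤ (x - a) * (-(u - v * b)) := mul_nonneg (by linarith) (by linarith)
    nlinarith

lemma affine_nonneg {u v a b x : ℝ} (ha : 0 ≤ u - v * a) (hb : 0 ≤ u - v * b)
    (h1 : a ≤ x) (h2 : x ≤ b) : 0 ≤ u - v * x := by
  have := affine_nonpos (u := -u) (v := -v) (a := a) (b := b) (x := x)
    (by linarith) (by linarith) h1 h2
  linarith

theorem stmt4 (dN : ℕ) (hdN : 1 ≤ dN) (r sNn k m1 m2 : ℝ)
    (hr0 : 0 < |r|) (hr1 : |r| < 1) (hrs : 0 < r * sNn)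
    (hm1 : 0 < m1) (hm2 : 0 < m2) (F : ℝ → ℝ) (hF : ContDiff ℝ 2 F)
    (hFm1 : F (-1) = 0) (hF1 : F 1 = 0)
    (hF'm1 : deriv F (-1) = 2 * (1 - r) ^ dN / m2)
    (hF'1 : deriv F 1 = -(2 * (1 + r) ^ dN) / m1)
    (hF'' : ∀ z ∈ Set.Icc (-1 : ℝ) 1,
      deriv (deriv F) z =
        (2 * (dN : ℝ) * sNn * r - k * (1 + r * z)) * (1 + r * z) ^ (dN - 1)) :
    ∀ z ∈ Set.Ioo (-1 : ℝ) 1, 0 < F z := by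
  -- basic facts
  have hr1' : -1 < r ∧ r < 1 := abs_lt.mp hr1
  have hdiff : Differentiable ℝ F := hF.differentiable (by norm_num)
  -- derivative signs at endpoints
  have h1r : (0:ℝ) < 1 - r := by linarith [hr1'.2]
  have h1r' : (0:ℝ) < 1 + r := by linarith [hr1'.1]
  have hd1neg : deriv F 1 < 0 := by
    rw [hF'1]
    have : (0:ℝ) < 2 * (1 + r) ^ dN := by positivity
    exact div_neg_of_neg_of_pos (by linarith) hm1
  have hdm1pos : 0 < deriv F (-1) := by
    rw [hF'm1]
    have : (0:ℝ) < 2 * (1 - r) ^ dN := by positivity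
    exact div_pos this hm2
  -- points with positive value near the endpoints
  have hq : ∀ z < (1:ℝ), ∃ q, z < q ∧ q < 1 ∧ 0 < F q :=
    fun z hz => aux_pos_near_one hF1 (hdiff 1) hd1neg hz
  have hp : ∀ z, -1 < z → ∃ p, -1 < p ∧ p < z ∧ 0 < F p :=
    fun z hz => aux_pos_near_neg_one hFm1 (hdiff (-1)) hdm1pos hz
  -- the affine factor
  set g : ℝ → ℝ := fun z => 2 * (dN : ℝ) * sNn * r - k * (1 + r * z) with hg
  -- positivity of the power factor on [-1,1]
  have hpow : ∀ z ∈ Icc (-1:ℝ) 1, (0:ℝ) < (1 + r * z) ^ (dN - 1) := by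
    intro z hz
    have : (0:ℝ) < 1 + r * z := by nlinarith [hz.1, hz.2, abs_lt.mp hr1, abs_nonneg r, neg_abs_le r, le_abs_self r]
    positivity
  -- convexity/concavity on subintervals from the sign of g
  have hdF : Differentiable ℝ (deriv F) := (hF.iterate_deriv' 1 1).differentiable (by norm_num)
  have hFC : Continuous F := hdiff.continuous
  have hconvOn : ∀ a b : ℝ, -1 ≤ a → b ≤ 1 → (∀ z ∈ Icc a b, 0 ≤ g z) → ConvexOn ℝ (Icc a b) F := by
    intro a b ha hb hsig
    apply convexOn_of_deriv2_nonneg (convex_Icc a b) hFC.continuousOn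
      hdiff.differentiableOn hdF.differentiableOn
    intro x hx
    rw [interior_Icc] at hx
    have hx' : x ∈ Icc (-1:ℝ) 1 := ⟨by linarith [hx.1], by linarith [hx.2]⟩
    have h2 : deriv^[2] F x = deriv (deriv F) x := by
      simp [Function.iterate_succ, Function.iterate_zero]
    rw [h2, hF'' x hx']
    exact mul_nonneg (hsig x ⟨le_of_lt hx.1, le_of_lt hx.2⟩) (le_of_lt (hpow x hx'))
  have hconcOn : ∀ a b : ℝ, -1 ≤ a → b ≤ 1 → (∀ z ∈ Icc a b, g z ≤ 0) → ConcaveOn ℝ (Icc a b) F := by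
    intro a b ha hb hsig
    apply concaveOn_of_deriv2_nonpos (convex_Icc a b) hFC.continuousOn
      hdiff.differentiableOn hdF.differentiableOn
    intro x hx
    rw [interior_Icc] at hx
    have hx' : x ∈ Icc (-1:ℝ) 1 := ⟨by linarith [hx.1], by linarith [hx.2]⟩
    have h2 : deriv^[2] F x = deriv (deriv F) x := by
      simp [Function.iterate_succ, Function.iterate_zero]
    rw [h2, hF'' x hx']
    exact mul_nonpos_of_nonpos_of_nonneg (hsig x ⟨le_of_lt hx.1, le_of_lt hx.2⟩)
      (le_of_lt (hpow x hx'))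
  intro z hz
  -- case analysis on the signs of g at the endpoints
  rcases le_or_gt (g (-1)) 0 with hgm1 | hgm1 <;> rcases le_or_gt (g 1) 0 with hg1 | hg1
  · -- concave everywhere
    obtain ⟨q, hzq, hq1, hFq⟩ := hq z hz.2
    have hconc : ConcaveOn ℝ (Icc (-1:ℝ) q) F := by
      apply hconcOn _ _ (le_refl _) (le_of_lt hq1)
      intro x hx
      -- g affine, nonpositive at -1 and 1, so nonpositive in between
      simp only [hg] at hgm1 hg1 ⊢
      have := affine_nonpos (u := 2 * (dN:ℝ) * sNn * r - k) (v := k * r)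
        (a := (-1:ℝ)) (b := 1) (x := x) (by linarith) (by linarith) hx.1 (by linarith [hx.2])
      linarith
    exact aux_left_concave hconc hFm1 hFq z ⟨hz.1, le_of_lt hzq⟩
  · -- g(-1) ≤ 0 < g(1): concave then convex; root c
    have hcont : ContinuousOn g (Icc (-1:ℝ) 1) := by
      apply Continuous.continuousOn; simp only [hg]; fun_prop
    rcases eq_or_lt_of_le hgm1 with heq | hlt
    · -- g(-1) = 0 : then g ≥ 0 on [-1,1] (affine with g(-1)=0 ≤ g(1))
      have hconv : ConvexOn ℝ (Icc (-1:ℝ) 1) F := by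
        apply hconvOn _ _ (le_refl _) (le_refl _)
        intro x hx
        simp only [hg] at heq hg1 ⊢
        have := affine_nonneg (u := 2 * (dN:ℝ) * sNn * r - k) (v := k * r)
          (a := (-1:ℝ)) (b := 1) (x := x) (by linarith) (by linarith) hx.1 hx.2
        linarith
      exact aux_right_convex hconv hF1 hq z ⟨le_of_lt hz.1, hz.2⟩
    · obtain ⟨c, hc, hgc⟩ : ∃ c ∈ Ioo (-1:ℝ) 1, g c = 0 := by
        have := intermediate_value_Ioo (by norm_num : (-1:ℝ) ≤ 1) hcont
        have h0 : (0:ℝ) ∈ Ioo (g (-1)) (g 1) := ⟨hlt, hg1⟩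
        obtain ⟨c, hc, hgc⟩ := this h0
        exact ⟨c, hc, hgc⟩
      have hconcL : ConcaveOn ℝ (Icc (-1:ℝ) c) F := by
        apply hconcOn _ _ (le_refl _) (le_of_lt hc.2)
        intro x hx
        simp only [hg] at hgc hlt ⊢
        have := affine_nonpos (u := 2 * (dN:ℝ) * sNn * r - k) (v := k * r)
          (a := (-1:ℝ)) (b := c) (x := x) (by linarith) (by linarith) hx.1 hx.2
        linarith
      have hconvR : ConvexOn ℝ (Icc c 1) F := by
        apply hconvOn _ _ (le_of_lt hc.1) (le_refl _)
        intro x hx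
        simp only [hg] at hgc hg1 ⊢
        have := affine_nonneg (u := 2 * (dN:ℝ) * sNn * r - k) (v := k * r)
          (a := c) (b := 1) (x := x) (by linarith) (by linarith) hx.1 hx.2
        linarith
      have hRpos := aux_right_convex hconvR hF1 hq
      rcases le_or_gt c z with hcz | hcz
      · exact hRpos z ⟨hcz, hz.2⟩
      · have hFc : 0 < F c := hRpos c ⟨le_refl _, hc.2⟩
        exact aux_left_concave hconcL hFm1 hFc z ⟨hz.1, le_of_lt hcz⟩
  · -- g(-1) > 0, g(1) ≤ 0 : convex then concave
    have hcont : ContinuousOn g (Icc (-1:ℝ) 1) := by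
      apply Continuous.continuousOn; simp only [hg]; fun_prop
    rcases eq_or_lt_of_le hg1 with heq | hlt
    · -- g(1) = 0: g ≥ 0 everywhere
      have hconv : ConvexOn ℝ (Icc (-1:ℝ) 1) F := by
        apply hconvOn _ _ (le_refl _) (le_refl _)
        intro x hx
        simp only [hg] at heq hgm1 ⊢
        have := affine_nonneg (u := 2 * (dN:ℝ) * sNn * r - k) (v := k * r)
          (a := (-1:ℝ)) (b := 1) (x := x) (by linarith) (by linarith) hx.1 hx.2
        linarith
      exact aux_right_convex hconv hF1 hq z ⟨le_of_lt hz.1, hz.2⟩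
    · obtain ⟨c, hc, hgc⟩ : ∃ c ∈ Ioo (-1:ℝ) 1, g c = 0 := by
        have := intermediate_value_Ioo' (by norm_num : (-1:ℝ) ≤ 1) hcont
        have h0 : (0:ℝ) ∈ Ioo (g 1) (g (-1)) := ⟨hlt, hgm1⟩
        obtain ⟨c, hc, hgc⟩ := this h0
        exact ⟨c, hc, hgc⟩
      have hconvL : ConvexOn ℝ (Icc (-1:ℝ) c) F := by
        apply hconvOn _ _ (le_refl _) (le_of_lt hc.2)
        intro x hx
        simp only [hg] at hgc hgm1 ⊢
        have := affine_nonneg (u := 2 * (dN:ℝ) * sNn * r - k) (v := k * r)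
          (a := (-1:ℝ)) (b := c) (x := x) (by linarith) (by linarith) hx.1 hx.2
        linarith
      have hconcR : ConcaveOn ℝ (Icc c 1) F := by
        apply hconcOn _ _ (le_of_lt hc.1) (le_refl _)
        intro x hx
        simp only [hg] at hgc hlt ⊢
        have := affine_nonpos (u := 2 * (dN:ℝ) * sNn * r - k) (v := k * r)
          (a := c) (b := 1) (x := x) (by linarith) (by linarith) hx.1 hx.2
        linarith
      have hLpos := aux_left_convex hconvL hFm1 hp
      rcases le_or_gt z c with hzc | hzc
      · exact hLpos z ⟨hz.1, hzc⟩
      · have hFc : 0 < F c := hLpos c ⟨hc.1, le_refl _⟩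
        exact aux_right_concave hconcR hFc hF1 z ⟨le_of_lt hzc, hz.2⟩
  · -- convex everywhere
    have hconv : ConvexOn ℝ (Icc (-1:ℝ) 1) F := by
      apply hconvOn _ _ (le_refl _) (le_refl _)
      intro x hx
      simp only [hg] at hgm1 hg1 ⊢
      have := affine_nonneg (u := 2 * (dN:ℝ) * sNn * r - k) (v := k * r)
        (a := (-1:ℝ)) (b := 1) (x := x) (by linarith) (by linarith) hx.1 hx.2
      linarith
    exact aux_right_convex hconv hF1 hq z ⟨le_of_lt hz.1, hz.2⟩
end

section
/- Let $d_N \ge 1$ be an integer, $0 < |r| < 1$, and $s_{N_n}$ a real number with $s_{N_n} r \ge 0$. Let $P(\mathfrak{z}) = 2 d_N s_{N_n} r + (\alpha \mathfrak{z} + \beta)(1 + r\mathfrak{z})$ be a polynomial of degree at most 2 in $\mathfrak{z}$ (with $\alpha, \beta \in \mathbb{R}$). Suppose $F : [-1,1] \to \mathbb{R}$ satisfies $F''(\mathfrak{z}) = (1 + r\mathfrak{z})^{d_N - 1} P(\mathfrak{z})$, $F(\pm 1) = 0$, $F'(-1) > 0$, and $F'(1) < 0$. Then $F(\mathfrak{z})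 > 0$ for all $\mathfrak{z} \in (-1,1)$. -/
open Set Filter Topology

private lemma quad_false (a b c t1 t2 t3 u : ℝ) (h12 : t1 < t2) (h23 : t2 < t3)
    (h1 : a*t1^2 + b*t1 + c < 0) (h2 : 0 < a*t2^2 + b*t2 + c)
    (h3 : a*t3^2 + b*t3 + c < 0) (hu : 0 ≤ a*u^2 + b*u + c)
    (hcase : u < t1 ∨ t3 < u) : False := by
  have h13 : t1 < t3 := h12.trans h23
  have ha : a < 0 := by
    nlinarith [mul_neg_of_neg_of_pos h1 (sub_pos.2 h23),
      mul_pos h2 (sub_pos.2 h13),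
      mul_neg_of_neg_of_pos h3 (sub_pos.2 h12),
      mul_pos (mul_pos (sub_pos.2 h12) (sub_pos.2 h23)) (sub_pos.2 h13)]
  rcases hcase with h | h
  · nlinarith [mul_pos h2 (sub_pos.2 (h.trans h12)),
      mul_nonneg hu (sub_pos.2 h12).le,
      mul_neg_of_neg_of_pos h1 (sub_pos.2 (h.trans h12)),
      mul_pos (mul_pos (sub_pos.2 h) (sub_pos.2 h12)) (sub_pos.2 (h.trans h12))]
  · nlinarith [mul_pos h2 (sub_pos.2 (h23.trans h)),
      mul_nonneg hu (sub_pos.2 h23).le,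
      mul_neg_of_neg_of_pos h3 (sub_pos.2 (h23.trans h)),
      mul_pos (mul_pos (sub_pos.2 h23) (sub_pos.2 h)) (sub_pos.2 (h23.trans h))]

private lemma pos_right (F : ℝ → ℝ) (hd : Differentiable ℝ F) (hFm1 : F (-1) = 0)
    (h' : 0 < deriv F (-1)) (m : ℝ) (hm : -1 < m) :
    ∃ a, a ∈ Ioo (-1 : ℝ) m ∧ 0 < F a := by
  have hslope : Tendsto (slope F (-1)) (𝓝[≠] (-1)) (𝓝 (deriv F (-1))) :=
    hasDerivAt_iff_tendsto_slope.1 (hd (-1)).hasDerivAt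
  have hev : ∀ᶠ x in 𝓝[≠] (-1 : ℝ), 0 < slope F (-1) x :=
    hslope.eventually (eventually_gt_nhds h')
  have hev2 : ∀ᶠ x in 𝓝[>] (-1 : ℝ), 0 < slope F (-1) x :=
    hev.filter_mono (nhdsWithin_mono _ fun x hx => ne_of_gt hx)
  have hmem : Ioo (-1 : ℝ) m ∈ 𝓝[>] (-1 : ℝ) := Ioo_mem_nhdsGT_of_mem ⟨le_refl _, hm⟩
  obtain ⟨a, ha, hai⟩ := (hev2.and (eventually_of_mem hmem fun x hx => hx)).exists
  refine ⟨a, hai, ?_⟩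
  rw [slope_def_field, hFm1] at ha
  have h1 : (0:ℝ) < a - (-1) := by linarith [hai.1]
  have h2 := mul_pos ha h1
  rwa [sub_zero, div_mul_cancel₀ _ (ne_of_gt h1)] at h2

private lemma pos_left (F : ℝ → ℝ) (hd : Differentiable ℝ F) (hF1 : F 1 = 0)
    (h' : deriv F 1 < 0) (m : ℝ) (hm : m < 1) :
    ∃ b, b ∈ Ioo m (1 : ℝ) ∧ 0 < F b := by
  have hslope : Tendsto (slope F 1) (𝓝[≠] (1:ℝ)) (𝓝 (deriv F 1)) :=
    hasDerivAt_iff_tendsto_slope.1 (hd 1).hasDerivAt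
  have hev : ∀ᶠ x in 𝓝[≠] (1 : ℝ), slope F 1 x < 0 :=
    hslope.eventually (eventually_lt_nhds h')
  have hev2 : ∀ᶠ x in 𝓝[<] (1 : ℝ), slope F 1 x < 0 :=
    hev.filter_mono (nhdsWithin_mono _ fun x hx => ne_of_lt hx)
  have hmem : Ioo m (1:ℝ) ∈ 𝓝[<] (1 : ℝ) := Ioo_mem_nhdsLT_of_mem ⟨hm, le_refl _⟩
  obtain ⟨b, hb, hbi⟩ := (hev2.and (eventually_of_mem hmem fun x hx => hx)).exists
  refine ⟨b, hbi, ?_⟩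
  rw [slope_def_field, hF1] at hb
  have h1 : b - 1 < 0 := by linarith [hbi.2]
  have h2 := mul_pos_of_neg_of_neg hb h1
  rwa [sub_zero, div_mul_cancel₀ _ (ne_of_lt h1)] at h2

theorem stmt5 (dN : ℕ) (hdN : 1 ≤ dN) (r sNn α β : ℝ)
    (hr0 : 0 < |r|) (hr1 : |r| < 1) (hrs : 0 ≤ sNn * r)
    (F : ℝ → ℝ) (hF : ContDiff ℝ 2 F)
    (hFm1 : F (-1) = 0) (hF1 : F 1 = 0)
    (hF'm1 : 0 < deriv F (-1)) (hF'1 : deriv F 1 < 0)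
    (hF'' : ∀ z ∈ Set.Icc (-1 : ℝ) 1,
      deriv (deriv F) z =
        (1 + r * z) ^ (dN - 1) * (2 * (dN : ℝ) * sNn * r + (α * z + β) * (1 + r * z))) :
    ∀ z ∈ Set.Ioo (-1 : ℝ) 1, 0 < F z := by
  have h2 : ContDiff ℝ ((1:ℕ)+1) F := by exact_mod_cast hF
  rw [contDiff_succ_iff_deriv] at h2
  have hd : Differentiable ℝ F := h2.1
  have hd' : Differentiable ℝ (deriv F) := h2.2.2.differentiable (by simp)
  intro z hz
  by_contra hle
  push_neg at hle
  -- points a < z < b with F positive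
  obtain ⟨a, hai, hFa⟩ := pos_right F hd hFm1 hF'm1 z hz.1
  obtain ⟨b, hbi, hFb⟩ := pos_left F hd hF1 hF'1 z hz.2
  -- MVT for F on [a,z] and [z,b]
  obtain ⟨c1, hc1i, hc1⟩ := exists_deriv_eq_slope F hai.2 hd.continuous.continuousOn
    hd.differentiableOn
  obtain ⟨c2, hc2i, hc2⟩ := exists_deriv_eq_slope F hbi.1 hd.continuous.continuousOn
    hd.differentiableOn
  have hzma : (0:ℝ) < z - a := sub_pos.2 hai.2
  have hbmz : (0:ℝ) < b - z := sub_pos.2 hbi.1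
  have hc1neg : deriv F c1 < 0 := by
    rw [hc1]; exact div_neg_of_neg_of_pos (by linarith) hzma
  have hc2pos : 0 < deriv F c2 := by
    rw [hc2]; exact div_pos (by linarith) hbmz
  -- bounds
  have ham1 : -1 < a := hai.1
  have hb1 : b < 1 := hbi.2
  have hc1b : -1 < c1 ∧ c1 < z := ⟨ham1.trans hc1i.1, hc1i.2⟩
  have hc2b : z < c2 ∧ c2 < 1 := ⟨hc2i.1, hc2i.2.trans hb1⟩
  have hc12 : c1 < c2 := hc1b.2.trans hc2b.1
  -- MVT for deriv F on [-1,c1], [c1,c2], [c2,1]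
  obtain ⟨t1, ht1i, ht1⟩ := exists_deriv_eq_slope (deriv F) hc1b.1
    hd'.continuous.continuousOn hd'.differentiableOn
  obtain ⟨t2, ht2i, ht2⟩ := exists_deriv_eq_slope (deriv F) hc12
    hd'.continuous.continuousOn hd'.differentiableOn
  obtain ⟨t3, ht3i, ht3⟩ := exists_deriv_eq_slope (deriv F) hc2b.2
    hd'.continuous.continuousOn hd'.differentiableOn
  have ht1'' : deriv (deriv F) t1 < 0 := by
    rw [ht1]; exact div_neg_of_neg_of_pos (by linarith) (by linarith [ht1i.1, ht1i.2])
  have ht2'' : 0 < deriv (deriv F) t2 := by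
    rw [ht2]; exact div_pos (by linarith) (by linarith [ht2i.1, ht2i.2])
  have ht3'' : deriv (deriv F) t3 < 0 := by
    rw [ht3]; exact div_neg_of_neg_of_pos (by linarith) (by linarith [ht3i.1, ht3i.2])
  have ht1m : t1 ∈ Set.Icc (-1:ℝ) 1 := ⟨ht1i.1.le, by nlinarith [ht1i.2, hc1b.2, hz.2]⟩
  have ht2m : t2 ∈ Set.Icc (-1:ℝ) 1 := ⟨by linarith [ht2i.1, hc1b.1], by linarith [ht2i.2, hc2b.2]⟩
  have ht3m : t3 ∈ Set.Icc (-1:ℝ) 1 := ⟨by linarith [ht3i.1, hc2b.1, hz.1], ht3i.2.le⟩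
  -- positivity of (1+r*t)^(dN-1)
  have hpow : ∀ t ∈ Set.Icc (-1:ℝ) 1, (0:ℝ) < (1 + r * t) ^ (dN - 1) := by
    intro t ht
    have h1 : |r * t| < 1 := by
      rw [abs_mul]
      calc |r| * |t| ≤ |r| * 1 :=
            mul_le_mul_of_nonneg_left (abs_le.2 ⟨ht.1, ht.2⟩) (abs_nonneg r)
        _ < 1 := by rw [mul_one]; exact hr1
    have h2 : (0:ℝ) < 1 + r * t := by linarith [(abs_lt.1 h1).1]
    positivity
  -- Q values
  set Q : ℝ → ℝ := fun t => 2 * (dN : ℝ) * sNn * r + (α * t + β) * (1 + r * t) with hQ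
  have hQt1 : Q t1 < 0 := by
    by_contra h
    push_neg at h
    have := mul_nonneg (hpow t1 ht1m).le h
    rw [← hF'' t1 ht1m] at this
    linarith
  have hQt2 : 0 < Q t2 := by
    by_contra h
    push_neg at h
    have hpw := hpow t2 ht2m
    have := mul_nonpos_of_nonneg_of_nonpos hpw.le h
    rw [← hF'' t2 ht2m] at this
    linarith
  have hQt3 : Q t3 < 0 := by
    by_contra h
    push_neg at h
    have := mul_nonneg (hpow t3 ht3m).le h
    rw [← hF'' t3 ht3m] at this
    linarith
  -- the outside point u = -1/r
  have hrne : r ≠ 0 := fun h => by simp [h] at hr0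
  set u : ℝ := -1 / r with hu
  have hru : 1 + r * u = 0 := by rw [hu, mul_div_assoc', mul_neg_one, neg_div, div_self hrne, add_neg_cancel]
  have hQu : 0 ≤ Q u := by
    rw [hQ]
    simp only
    rw [hru, mul_zero, add_zero]
    have : (1:ℝ) ≤ (dN:ℝ) := by exact_mod_cast hdN
    nlinarith
  have hucase : u < t1 ∨ t3 < u := by
    have habs : 1 < |u| := by
      rw [hu, abs_div, abs_neg, abs_one]
      rw [lt_div_iff₀ hr0]
      linarith
    rcases abs_cases u with ⟨he, _⟩ | ⟨he, _⟩
    · right; rw [he] at habs; linarith [ht3m.2, ht3i.2, hc2b.2]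
    · left; rw [he] at habs; linarith [ht1m.1, ht1i.1]
  -- convert to quadratic form and conclude
  have hform : ∀ t : ℝ, Q t = (α*r)*t^2 + (α + β*r)*t + (2*(dN:ℝ)*sNn*r + β) := by
    intro t; rw [hQ]; ring
  have ht12 : t1 < t2 := by linarith [ht1i.2, ht2i.1]
  have ht23 : t2 < t3 := by linarith [ht2i.2, ht3i.1]
  exact quad_false (α*r) (α + β*r) (2*(dN:ℝ)*sNn*r + β) t1 t2 t3 u ht12 ht23
    (by rw [← hform]; exact hQt1) (by rw [← hform]; exact hQt2)
    (by rw [← hform]; exact hQt3) (by rw [← hform]; exact hQu) hucase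
end

section
/- Let $d_N \ge 1$ be an integer and fix $t \in (0,1)$. Define $j(b) = \int_{-1}^{1} \big((1-b) - (1+b)\mathfrak{z}\big)\big((b+t) + (b-t)\mathfrak{z}\big)^{d_N}\, d\mathfrak{z}$ for $b > t$. Then $j(t) > 0$ and $j(b) \to -\infty$ as $b \to +\infty$; consequently there exists $b \in (t, +\infty)$ with $j(b) = 0$. -/
open intervalIntegral Filter

/-- The function `j(b)` of the Sasaki–Einstein slope condition. -/
noncomputable def jfun (dN : ℕ) (t b : ℝ) : ℝ :=
  ∫ z in (-1 : ℝ)..1, ((1 - b) - (1 + b) * z) * ((b + t) + (b - t) * z) ^ dN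

lemma jcont (dN : ℕ) (t : ℝ) : Continuous (jfun dN t) := by
  have h : Continuous (Function.uncurry fun b z : ℝ =>
      ((1 - b) - (1 + b) * z) * ((b + t) + (b - t) * z) ^ dN) := by fun_prop
  exact intervalIntegral.continuous_parametric_intervalIntegral_of_continuous' h (-1) 1

lemma jbound (n : ℕ) (hn : 1 ≤ n) (t : ℝ) (ht0 : 0 < t) (ht1 : t < 1) (b : ℝ)
    (hb : 2 * (n : ℝ) + 4 ≤ b) : jfun n t b ≤ -b := by
  have hn1 : (1 : ℝ) ≤ (n : ℝ) := by exact_mod_cast hn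
  have hb1 : (1 : ℝ) ≤ b := by linarith
  have hf : Continuous fun z : ℝ => ((1 - b) - (1 + b) * z) * ((b + t) + (b - t) * z) ^ n := by
    fun_prop
  have hsplit : jfun n t b =
      (∫ z in (-1 : ℝ)..0, ((1 - b) - (1 + b) * z) * ((b + t) + (b - t) * z) ^ n) +
      ∫ z in (0 : ℝ)..1, ((1 - b) - (1 + b) * z) * ((b + t) + (b - t) * z) ^ n :=
    (integral_add_adjacent_intervals (hf.intervalIntegrable _ _)
      (hf.intervalIntegrable _ _)).symm
  have hI1 : (∫ z in (-1 : ℝ)..0, ((1 - b) - (1 + b) * z) * ((b + t) + (b - t) * z) ^ n)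
      ≤ 2 * (2 * b) ^ n := by
    have := integral_mono_on (a := (-1 : ℝ)) (b := 0) (by norm_num)
      (hf.intervalIntegrable _ _)
      ((continuous_const (y := 2 * (2 * b) ^ n)).intervalIntegrable (μ := MeasureTheory.volume) _ _)
      (fun z hz => by
        obtain ⟨hz1, hz2⟩ := hz
        have hf2a : 0 ≤ (b + t) + (b - t) * z := by nlinarith
        have hf2b : (b + t) + (b - t) * z ≤ 2 * b := by nlinarith
        have hpow : ((b + t) + (b - t) * z) ^ n ≤ (2 * b) ^ n := pow_le_pow_left₀ hf2a hf2b n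
        rcases le_or_gt ((1 - b) - (1 + b) * z) 0 with h | h
        · have h0 : ((1 - b) - (1 + b) * z) * ((b + t) + (b - t) * z) ^ n ≤ 0 :=
            mul_nonpos_of_nonpos_of_nonneg h (pow_nonneg hf2a n)
          have : (0 : ℝ) ≤ 2 * (2 * b) ^ n := by positivity
          linarith
        · have h1 : (1 - b) - (1 + b) * z ≤ 2 := by nlinarith
          calc ((1 - b) - (1 + b) * z) * ((b + t) + (b - t) * z) ^ n
              ≤ 2 * ((b + t) + (b - t) * z) ^ n :=
                mul_le_mul_of_nonneg_right h1 (pow_nonneg hf2a n)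
            _ ≤ 2 * (2 * b) ^ n := by nlinarith)
    simpa using this
  have hI2 : (∫ z in (0 : ℝ)..1, ((1 - b) - (1 + b) * z) * ((b + t) + (b - t) * z) ^ n)
      ≤ (1 - b) * (2 * b) ^ n / ((n : ℝ) + 1) := by
    have hmono := integral_mono_on (a := (0 : ℝ)) (b := 1) (by norm_num)
      (hf.intervalIntegrable _ _)
      ((continuous_const.mul (continuous_pow n)).intervalIntegrable (μ := MeasureTheory.volume) 0 1)
      (f := fun z => ((1 - b) - (1 + b) * z) * ((b + t) + (b - t) * z) ^ n)
      (g := fun z => (1 - b) * (2 * b) ^ n * z ^ n)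
      (fun z hz => by
        obtain ⟨hz0, hz1⟩ := hz
        have h2 : 2 * b * z ≤ (b + t) + (b - t) * z := by nlinarith
        have h2n : (2 * b * z) ^ n ≤ ((b + t) + (b - t) * z) ^ n :=
          pow_le_pow_left₀ (by positivity) h2 n
        have h1 : (1 - b) - (1 + b) * z ≤ 1 - b := by nlinarith
        have h1' : (1 - b) - (1 + b) * z ≤ 0 := by nlinarith
        calc ((1 - b) - (1 + b) * z) * ((b + t) + (b - t) * z) ^ n
            ≤ ((1 - b) - (1 + b) * z) * (2 * b * z) ^ n :=
              mul_le_mul_of_nonpos_left h2n h1'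
          _ ≤ (1 - b) * (2 * b * z) ^ n :=
              mul_le_mul_of_nonneg_right h1 (by positivity)
          _ = (1 - b) * (2 * b) ^ n * z ^ n := by rw [mul_pow]; ring)
    have hcalc : (∫ z in (0 : ℝ)..1, (1 - b) * (2 * b) ^ n * z ^ n)
        = (1 - b) * (2 * b) ^ n / ((n : ℝ) + 1) := by
      rw [integral_const_mul, integral_pow]
      norm_num [div_eq_mul_inv]
    linarith [hmono, hcalc.le, hcalc.ge]
  have hP : ((n : ℝ) + 1) * b ≤ (2 * b) ^ n := by
    have h2n : (n : ℝ) + 1 ≤ 2 ^ n := by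
      have := Nat.lt_two_pow_self (n := n)
      have : (n : ℝ) + 1 ≤ ((2 ^ n : ℕ) : ℝ) := by exact_mod_cast this
      simpa using this
    have hbn : b ≤ b ^ n := le_self_pow₀ hb1 (by omega)
    calc ((n : ℝ) + 1) * b ≤ 2 ^ n * b ^ n :=
          mul_le_mul h2n hbn (by linarith) (by positivity)
      _ = (2 * b) ^ n := (mul_pow 2 b n).symm
  have hden : (0 : ℝ) < (n : ℝ) + 1 := by positivity
  have hP0 : (0 : ℝ) ≤ (2 * b) ^ n := by positivity
  have key : 2 * (2 * b) ^ n + (1 - b) * (2 * b) ^ n / ((n : ℝ) + 1) ≤ -b := by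
    rw [show 2 * (2 * b) ^ n + (1 - b) * (2 * b) ^ n / ((n : ℝ) + 1)
        = (2 * (2 * b) ^ n * ((n : ℝ) + 1) + (1 - b) * (2 * b) ^ n) / ((n : ℝ) + 1) by
      field_simp]
    rw [div_le_iff₀ hden]
    have h4 : 1 * (2 * b) ^ n ≤ (b - (2 * (n : ℝ) + 3)) * (2 * b) ^ n :=
      mul_le_mul_of_nonneg_right (by linarith) hP0
    nlinarith
  calc jfun n t b = _ + _ := hsplit
    _ ≤ 2 * (2 * b) ^ n + (1 - b) * (2 * b) ^ n / ((n : ℝ) + 1) := add_le_add hI1 hI2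
    _ ≤ -b := key

lemma jt_pos (n : ℕ) (t : ℝ) (ht0 : 0 < t) (ht1 : t < 1) : 0 < jfun n t t := by
  have h : jfun n t t = 2 * (1 - t) * (2 * t) ^ n := by
    unfold jfun
    simp only [sub_self, zero_mul, add_zero]
    rw [intervalIntegral.integral_mul_const]
    have hlin : (∫ x in (-1:ℝ)..1, (1 - t - (1 + t) * x)) = 2 * (1 - t) := by
      rw [intervalIntegral.integral_sub
        ((by fun_prop : Continuous fun _ : ℝ => 1 - t).intervalIntegrable _ _)
        ((by fun_prop : Continuous fun x : ℝ => (1 + t) * x).intervalIntegrable _ _),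
        intervalIntegral.integral_const_mul, integral_id, intervalIntegral.integral_const]
      norm_num
    rw [hlin]
    ring
  rw [h]
  have : (0 : ℝ) < (2 * t) ^ n := by positivity
  nlinarith

theorem stmt8 (dN : ℕ) (hdN : 1 ≤ dN) (t : ℝ) (ht : t ∈ Set.Ioo (0 : ℝ) 1) :
    0 < jfun dN t t ∧
    Filter.Tendsto (jfun dN t) Filter.atTop Filter.atBot ∧
    ∃ b : ℝ, t < b ∧ jfun dN t b = 0 := by
  obtain ⟨ht0, ht1⟩ := ht
  have hpos := jt_pos dN t ht0 ht1
  refine ⟨hpos, ?_, ?_⟩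
  · refine tendsto_atBot_mono' atTop ?_ tendsto_neg_atTop_atBot
    filter_upwards [eventually_ge_atTop (2 * (dN : ℝ) + 4)] with b hb
    exact jbound dN hdN t ht0 ht1 b hb
  · set B : ℝ := 2 * (dN : ℝ) + 4 with hB
    have hdN1 : (1 : ℝ) ≤ (dN : ℝ) := by exact_mod_cast hdN
    have htB : t ≤ B := by simp only [hB]; linarith
    have hjB : jfun dN t B ≤ -B := jbound dN hdN t ht0 ht1 B le_rfl
    have hmem : (0 : ℝ) ∈ Set.Icc (jfun dN t B) (jfun dN t t) :=
      ⟨by simp only [hB] at hjB ⊢; linarith, hpos.le⟩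
    obtain ⟨x, hx, hfx⟩ := intermediate_value_Icc' htB ((jcont dN t).continuousOn) hmem
    refine ⟨x, lt_of_le_of_ne hx.1 ?_, hfx⟩
    intro h
    rw [← h] at hfx
    linarith [hfx ▸ hpos]
end

section
/- Let $d_N \ge 1$ be an integer and $t \in (0,1)$. The polynomial $h(b) = (1 + d_N) b^{d_N + 3} - (1 + 2t + d_N t) b^{d_N + 2} + (2 + d_N + t) t^{d_N + 1} b - (1 + d_N) t^{d_N + 2}$ satisfies $h''(t) < 0$ and $h(b) \to +\infty$ as $b \to +\infty$; consequently $h$ has a root in $(t, +\infty)$. -/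
/-- The polynomial `h(b)` of the reduced CSC equation in the Kähler-Einstein case. -/
noncomputable def hfun (dN : ℕ) (t : ℝ) : ℝ → ℝ := fun b =>
  (1 + (dN : ℝ)) * b ^ (dN + 3) - (1 + 2 * t + (dN : ℝ) * t) * b ^ (dN + 2)
    + (2 + (dN : ℝ) + t) * t ^ (dN + 1) * b - (1 + (dN : ℝ)) * t ^ (dN + 2)

noncomputable def gfun (dN : ℕ) (t : ℝ) : ℝ → ℝ := fun b =>
  (1 + (dN : ℝ)) * ((dN + 3) * b ^ (dN + 2)) - (1 + 2 * t + (dN : ℝ) * t) * ((dN + 2) * b ^ (dN + 1))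
    + (2 + (dN : ℝ) + t) * t ^ (dN + 1)

lemma hfun_hasDeriv (dN : ℕ) (t b : ℝ) : HasDerivAt (hfun dN t) (gfun dN t b) b := by
  have h1 := (hasDerivAt_pow (dN + 3) b).const_mul (1 + (dN : ℝ))
  have h2 := (hasDerivAt_pow (dN + 2) b).const_mul (1 + 2 * t + (dN : ℝ) * t)
  have h3 := (hasDerivAt_id b).const_mul ((2 + (dN : ℝ) + t) * t ^ (dN + 1))
  have := ((h1.sub h2).add h3).sub_const ((1 + (dN : ℝ)) * t ^ (dN + 2))
  refine this.congr_deriv ?_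
  unfold gfun; push_cast; ring

lemma gfun_hasDeriv (dN : ℕ) (t b : ℝ) :
    HasDerivAt (gfun dN t)
      ((1 + (dN : ℝ)) * ((dN + 3) * ((dN + 2) * b ^ (dN + 1)))
        - (1 + 2 * t + (dN : ℝ) * t) * ((dN + 2) * ((dN + 1) * b ^ dN))) b := by
  have h1 := ((hasDerivAt_pow (dN + 2) b).const_mul ((dN : ℝ) + 3)).const_mul (1 + (dN : ℝ))
  have h2 := ((hasDerivAt_pow (dN + 1) b).const_mul ((dN : ℝ) + 2)).const_mul
    (1 + 2 * t + (dN : ℝ) * t)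
  have := (h1.sub h2).add_const ((2 + (dN : ℝ) + t) * t ^ (dN + 1))
  refine this.congr_deriv ?_
  push_cast; ring

lemma deriv_hfun (dN : ℕ) (t : ℝ) : deriv (hfun dN t) = gfun dN t :=
  funext fun b => (hfun_hasDeriv dN t b).deriv

lemma gfun_t (dN : ℕ) (t : ℝ) : gfun dN t t = 0 := by
  unfold gfun
  have e : t ^ (dN + 2) = t ^ (dN + 1) * t := pow_succ t (dN + 1)
  rw [e]; ring

lemma hfun_t (dN : ℕ) (t : ℝ) : hfun dN t t = 0 := by
  unfold hfun
  have e3 : t ^ (dN + 3) = t ^ (dN + 1) * t * t := by rw [pow_succ, pow_succ]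
  have e2 : t ^ (dN + 2) = t ^ (dN + 1) * t := pow_succ t (dN + 1)
  rw [e3, e2]; ring

lemma second_deriv_neg (dN : ℕ) (t : ℝ) (ht : t ∈ Set.Ioo (0 : ℝ) 1) :
    (1 + (dN : ℝ)) * ((dN + 3) * ((dN + 2) * t ^ (dN + 1)))
      - (1 + 2 * t + (dN : ℝ) * t) * ((dN + 2) * ((dN + 1) * t ^ dN)) < 0 := by
  have e : t ^ (dN + 1) = t ^ dN * t := pow_succ t dN
  have key : (1 + (dN : ℝ)) * ((dN + 3) * ((dN + 2) * t ^ (dN + 1)))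
      - (1 + 2 * t + (dN : ℝ) * t) * ((dN + 2) * ((dN + 1) * t ^ dN))
      = ((dN : ℝ) + 1) * ((dN : ℝ) + 2) * (t - 1) * t ^ dN := by
    rw [e]; ring
  rw [key]
  have hp : (0 : ℝ) < ((dN : ℝ) + 1) * ((dN : ℝ) + 2) * t ^ dN :=
    mul_pos (by positivity) (pow_pos ht.1 dN)
  nlinarith [ht.2]

theorem stmt10 (dN : ℕ) (hdN : 1 ≤ dN) (t : ℝ) (ht : t ∈ Set.Ioo (0 : ℝ) 1) :
    deriv (deriv (hfun dN t)) t < 0 ∧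
    Filter.Tendsto (hfun dN t) Filter.atTop Filter.atTop ∧
    ∃ b : ℝ, t < b ∧ hfun dN t b = 0 := by
  obtain ⟨ht0, ht1⟩ := ht
  have hcont : Continuous (hfun dN t) := by unfold hfun; fun_prop
  have hderiv2 : deriv (deriv (hfun dN t)) t < 0 := by
    rw [deriv_hfun, (gfun_hasDeriv dN t t).deriv]
    exact second_deriv_neg dN t ⟨ht0, ht1⟩
  -- part 2
  set A : ℝ := 1 + 2 * t + (dN : ℝ) * t with hA
  set Bc : ℝ := (2 + (dN : ℝ) + t) * t ^ (dN + 1) with hBc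
  set C : ℝ := (1 + (dN : ℝ)) * t ^ (dN + 2) with hC
  have hBc0 : 0 ≤ Bc := by positivity
  have hC0 : 0 ≤ C := by positivity
  have htend : Filter.Tendsto (hfun dN t) Filter.atTop Filter.atTop := by
    apply Filter.tendsto_atTop_mono' Filter.atTop
      (Filter.eventually_atTop.2 ⟨max 1 (A + C + 1), ?_⟩) Filter.tendsto_id
    intro b hb
    have hb1 : (1 : ℝ) ≤ b := le_trans (le_max_left _ _) hb
    have hbA : A + C + 1 ≤ b := le_trans (le_max_right _ _) hb
    have hpow : b ≤ b ^ (dN + 2) := le_self_pow₀ hb1 (by omega)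
    have hfac : C + 1 ≤ (1 + (dN : ℝ)) * b - A := by
      have : (0:ℝ) ≤ (dN : ℝ) * b := by positivity
      nlinarith
    have hmul : b * (C + 1) ≤ b ^ (dN + 2) * ((1 + (dN : ℝ)) * b - A) := by
      apply mul_le_mul hpow hfac (by linarith) (by positivity)
    have hexp : hfun dN t b = b ^ (dN + 2) * ((1 + (dN : ℝ)) * b - A) + Bc * b - C := by
      unfold hfun
      have e : b ^ (dN + 3) = b ^ (dN + 2) * b := pow_succ b (dN + 2)
      rw [e, hA, hBc, hC]; ring
    have hBcb : 0 ≤ Bc * b := mul_nonneg hBc0 (by linarith)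
    simp only [id_eq]
    nlinarith
  refine ⟨hderiv2, htend, ?_⟩
  -- h is negative just to the right of t
  have hg : HasDerivAt (gfun dN t)
      ((1 + (dN : ℝ)) * ((dN + 3) * ((dN + 2) * t ^ (dN + 1)))
        - (1 + 2 * t + (dN : ℝ) * t) * ((dN + 2) * ((dN + 1) * t ^ dN))) t :=
    gfun_hasDeriv dN t t
  have hL : (1 + (dN : ℝ)) * ((dN + 3) * ((dN + 2) * t ^ (dN + 1)))
      - (1 + 2 * t + (dN : ℝ) * t) * ((dN + 2) * ((dN + 1) * t ^ dN)) < 0 :=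
    second_deriv_neg dN t ⟨ht0, ht1⟩
  have hslope := hasDerivAt_iff_tendsto_slope.mp hg
  have hslope' : Filter.Tendsto (slope (gfun dN t) t) (nhdsWithin t (Set.Ioi t)) (nhds _) :=
    hslope.mono_left (nhdsWithin_mono t (fun x hx => ne_of_gt hx))
  have hev : ∀ᶠ b in nhdsWithin t (Set.Ioi t), slope (gfun dN t) t b < 0 :=
    hslope'.eventually_lt_const hL
  have hev2 : ∀ᶠ b in nhdsWithin t (Set.Ioi t), gfun dN t b < 0 := by
    filter_upwards [hev, self_mem_nhdsWithin] with b hb hbt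
    rw [slope_def_field, gfun_t, sub_zero] at hb
    have hbt' : 0 < b - t := sub_pos.2 hbt
    have := mul_neg_of_neg_of_pos hb hbt'
    rw [div_mul_cancel₀] at this
    · exact this
    · exact ne_of_gt hbt'
  obtain ⟨ε, hε, hball⟩ := Metric.mem_nhdsWithin_iff.mp hev2
  set b1 : ℝ := t + ε / 2 with hb1def
  have htb1 : t < b1 := by simp [hb1def]; linarith
  have hneg : ∀ x ∈ Set.Ioo t b1, gfun dN t x < 0 := by
    intro x hx
    apply hball
    refine ⟨Metric.mem_ball.2 ?_, Set.mem_Ioi.2 hx.1⟩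
    rw [Real.dist_eq, abs_of_pos (sub_pos.2 hx.1)]
    have := hx.2
    simp only [hb1def] at this
    linarith
  have hanti : StrictAntiOn (hfun dN t) (Set.Icc t b1) := by
    apply strictAntiOn_of_deriv_neg (convex_Icc t b1) hcont.continuousOn
    intro x hx
    rw [interior_Icc] at hx
    rw [deriv_hfun]
    exact hneg x hx
  have hb1neg : hfun dN t b1 < 0 := by
    have := hanti (Set.left_mem_Icc.2 (le_of_lt htb1))
      (Set.right_mem_Icc.2 (le_of_lt htb1)) htb1
    rwa [hfun_t] at this
  obtain ⟨B, hB1, hB2⟩ := ((htend.eventually_ge_atTop 1).and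
    (Filter.eventually_ge_atTop (b1 + 1))).exists
  have hb1B : b1 ≤ B := by linarith
  have hivt := intermediate_value_Ioo hb1B hcont.continuousOn
  have h0mem : (0 : ℝ) ∈ Set.Ioo (hfun dN t b1) (hfun dN t B) := ⟨hb1neg, by linarith⟩
  obtain ⟨b, hbmem, hbval⟩ := hivt h0mem
  exact ⟨b, lt_trans htb1 hbmem.1, hbval⟩
end

section
/- For $k > 1$ rational, the quantity $t = \frac{\int_{-1}^1 (1 - \mathfrak{z})((k+1) + (k-1)\mathfrak{z})^{d_N}\, d\mathfrak{z}}{k \int_{-1}^1 (1 + \mathfrak{z})((k+1) + (k-1)\mathfrak{z})^{d_N}\, d\mathfrak{z}}$ is a rational number satisfying $0 < t < 1$, and $b = kt$ satisfies the Sasaki-Einstein slope equation $\int_{-1}^1 ((1 - b) - (1 + b)\mathfrak{z})((b + t) + (b - t)\mathfrak{z})^{d_N}\, d\mathfrak{z} = 0$. -/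
private lemma auxh (d : ℕ) (k : ℚ) (hk : 1 < k) :
    0 < k ^ (d + 2) - ((d : ℚ) + 2) * k + ((d : ℚ) + 1) := by
  induction d with
  | zero => push_cast; nlinarith [sq_nonneg (k - 1)]
  | succ n ih =>
      push_cast at ih ⊢
      have hid : k ^ (n + 1 + 2) - ((n : ℚ) + 1 + 2) * k + ((n : ℚ) + 1 + 1)
          = k * (k ^ (n + 2) - ((n : ℚ) + 2) * k + ((n : ℚ) + 1))
            + ((n : ℚ) + 2) * (k - 1) ^ 2 := by ring
      rw [hid]
      have hk0 : (0 : ℚ) < k := by linarith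
      nlinarith [mul_pos hk0 ih, sq_nonneg (k - 1)]

private lemma auxg (d : ℕ) (k : ℚ) (hk : 1 < k) :
    0 < ((d : ℚ) + 1) * k ^ (d + 2) - ((d : ℚ) + 2) * k ^ (d + 1) + 1 := by
  induction d with
  | zero => push_cast; nlinarith [sq_nonneg (k - 1)]
  | succ n ih =>
      push_cast at ih ⊢
      have hid : ((n : ℚ) + 1 + 1) * k ^ (n + 1 + 2) - ((n : ℚ) + 1 + 2) * k ^ (n + 1 + 1) + 1
          = k * (((n : ℚ) + 1) * k ^ (n + 2) - ((n : ℚ) + 2) * k ^ (n + 1) + 1)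
            + (k - 1) * (k ^ (n + 2) - 1) := by ring
      rw [hid]
      have hk0 : (0 : ℚ) < k := by linarith
      have hpow : (1 : ℚ) ≤ k ^ (n + 2) := one_le_pow₀ hk.le
      nlinarith [mul_pos hk0 ih]

private lemma auxf (d : ℕ) (k : ℚ) (hk : 1 < k) :
    0 < ((d : ℚ) + 1) * k ^ (d + 3) - ((d : ℚ) + 3) * k ^ (d + 2) + ((d : ℚ) + 3) * k - ((d : ℚ) + 1) := by
  induction d with
  | zero =>
      push_cast
      have : (0 : ℚ) < (k - 1) ^ 3 := pow_pos (by linarith) 3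
      nlinarith [this]
  | succ n ih =>
      push_cast at ih ⊢
      have hh := auxh (n + 1) k hk
      push_cast at hh
      have hid : ((n : ℚ) + 1 + 1) * k ^ (n + 1 + 3) - ((n : ℚ) + 1 + 3) * k ^ (n + 1 + 2)
            + ((n : ℚ) + 1 + 3) * k - ((n : ℚ) + 1 + 1)
          = k * (((n : ℚ) + 1) * k ^ (n + 3) - ((n : ℚ) + 3) * k ^ (n + 2) + ((n : ℚ) + 3) * k - ((n : ℚ) + 1))
            + (k - 1) * (k ^ (n + 1 + 2) - ((n : ℚ) + 1 + 2) * k + ((n : ℚ) + 1 + 1)) := by ring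
      rw [hid]
      have hk0 : (0 : ℚ) < k := by linarith
      nlinarith [mul_pos hk0 ih, mul_pos (show (0:ℚ) < k - 1 by linarith) hh]

theorem stmt19 (dN : ℕ) (hdN : 1 ≤ dN) (k : ℚ) (hk : 1 < k) :
    ∃ t : ℚ,
      (t : ℝ) = (∫ z in (-1 : ℝ)..1, (1 - z) * (((k : ℝ) + 1) + ((k : ℝ) - 1) * z) ^ dN) /
        ((k : ℝ) * ∫ z in (-1 : ℝ)..1, (1 + z) * (((k : ℝ) + 1) + ((k : ℝ) - 1) * z) ^ dN) ∧
      0 < t ∧ t < 1 ∧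
      (∫ z in (-1 : ℝ)..1,
        ((1 - (k : ℝ) * t) - (1 + (k : ℝ) * t) * z) *
          (((k : ℝ) * t + t) + ((k : ℝ) * t - t) * z) ^ dN) = 0 := by
  -- rational data
  set c2 : ℚ := (k-1)^2*((dN:ℚ)+1)*((dN:ℚ)+2) with hc2def
  set a : ℚ := 2*(k*(2*k)^(dN+1) - (((dN:ℚ)+2)*k - ((dN:ℚ)+1))*2^(dN+1)) / c2 with hadef
  set b : ℚ := 2*((((dN:ℚ)+1)*k - ((dN:ℚ)+2))*(2*k)^(dN+1) + 2^(dN+1)) / c2 with hbdef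
  have hk1q : (0:ℚ) < k - 1 := by linarith
  have hkq : (0:ℚ) < k := by linarith
  have hc2pos : 0 < c2 := by
    rw [hc2def]
    exact mul_pos (mul_pos (pow_pos hk1q 2) (by positivity)) (by positivity)
  have hc2ne : c2 ≠ 0 := ne_of_gt hc2pos
  -- positivity of a, b, and a < k*b
  have ha' : a = 2*2^(dN+1)*(k^(dN+2) - ((dN:ℚ)+2)*k + ((dN:ℚ)+1)) / c2 := by
    rw [hadef]; congr 1; ring
  have hb' : b = 2*2^(dN+1)*(((dN:ℚ)+1)*k^(dN+2) - ((dN:ℚ)+2)*k^(dN+1) + 1) / c2 := by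
    rw [hbdef]; congr 1; ring
  have hapos : 0 < a := by
    rw [ha']; exact div_pos (mul_pos (by positivity) (auxh dN k hk)) hc2pos
  have hbpos : 0 < b := by
    rw [hb']; exact div_pos (mul_pos (by positivity) (auxg dN k hk)) hc2pos
  have hsub : k * b - a = 2*2^(dN+1)*(((dN:ℚ)+1)*k^(dN+3) - ((dN:ℚ)+3)*k^(dN+2)
      + ((dN:ℚ)+3)*k - ((dN:ℚ)+1)) / c2 := by
    rw [hadef, hbdef]; field_simp; ring
  have hlt : a < k * b := by
    have h1 : 0 < k * b - a := by
      rw [hsub]; exact div_pos (mul_pos (by positivity) (auxf dN k hk)) hc2pos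
    linarith
  have hkbpos : 0 < k * b := mul_pos hkq hbpos
  -- real-side facts
  have hK : (1:ℝ) < (k:ℝ) := by exact_mod_cast hk
  have hK1 : (k:ℝ) - 1 ≠ 0 := by linarith
  have hd1 : ((dN:ℝ)+1) ≠ 0 := by positivity
  have hd2 : ((dN:ℝ)+2) ≠ 0 := by positivity
  have hP : ∀ x : ℝ, HasDerivAt (fun z => ((k:ℝ)+1)+((k:ℝ)-1)*z) ((k:ℝ)-1) x := fun x => by
    simpa using (((hasDerivAt_id x).const_mul ((k:ℝ)-1)).const_add ((k:ℝ)+1))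
  have hA : (∫ z in (-1 : ℝ)..1, (1 - z) * (((k : ℝ) + 1) + ((k : ℝ) - 1) * z) ^ dN)
      = (a : ℝ) := by
    have hG : ∀ x ∈ Set.uIcc (-1:ℝ) 1, HasDerivAt
        (fun z => (1-z)*(((k:ℝ)+1)+((k:ℝ)-1)*z)^(dN+1)/(((k:ℝ)-1)*((dN:ℝ)+1))
          + (((k:ℝ)+1)+((k:ℝ)-1)*z)^(dN+2)/(((k:ℝ)-1)^2*((dN:ℝ)+1)*((dN:ℝ)+2)))
        ((1-x)*(((k:ℝ)+1)+((k:ℝ)-1)*x)^dN) x := by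
      intro x _
      have h1 : HasDerivAt (fun z:ℝ => 1 - z) (-1) x := by
        simpa using (hasDerivAt_id x).const_sub 1
      have h2 := (h1.mul ((hP x).pow (dN+1))).div_const (((k:ℝ)-1)*((dN:ℝ)+1))
      have h3 := ((hP x).pow (dN+2)).div_const (((k:ℝ)-1)^2*((dN:ℝ)+1)*((dN:ℝ)+2))
      convert h2.add h3 using 1
      · rfl
      · rfl
      · funext z; rfl
      simp only [Nat.add_sub_cancel, Pi.pow_apply]
      push_cast
      field_simp
      ring
    rw [intervalIntegral.integral_eq_sub_of_hasDerivAt hG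
      (Continuous.intervalIntegrable (by fun_prop) _ _)]
    rw [hadef, hc2def]
    push_cast
    field_simp
    ring
  have hB : (∫ z in (-1 : ℝ)..1, (1 + z) * (((k : ℝ) + 1) + ((k : ℝ) - 1) * z) ^ dN)
      = (b : ℝ) := by
    have hF : ∀ x ∈ Set.uIcc (-1:ℝ) 1, HasDerivAt
        (fun z => (1+z)*(((k:ℝ)+1)+((k:ℝ)-1)*z)^(dN+1)/(((k:ℝ)-1)*((dN:ℝ)+1))
          - (((k:ℝ)+1)+((k:ℝ)-1)*z)^(dN+2)/(((k:ℝ)-1)^2*((dN:ℝ)+1)*((dN:ℝ)+2)))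
        ((1+x)*(((k:ℝ)+1)+((k:ℝ)-1)*x)^dN) x := by
      intro x _
      have h1 : HasDerivAt (fun z:ℝ => 1 + z) 1 x := by
        simpa using (hasDerivAt_id x).const_add 1
      have h2 := (h1.mul ((hP x).pow (dN+1))).div_const (((k:ℝ)-1)*((dN:ℝ)+1))
      have h3 := ((hP x).pow (dN+2)).div_const (((k:ℝ)-1)^2*((dN:ℝ)+1)*((dN:ℝ)+2))
      convert h2.sub h3 using 1
      · rfl
      · rfl
      · funext z; rfl
      simp only [Nat.add_sub_cancel, Pi.pow_apply]
      push_cast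
      field_simp
      ring
    rw [intervalIntegral.integral_eq_sub_of_hasDerivAt hF
      (Continuous.intervalIntegrable (by fun_prop) _ _)]
    rw [hbdef, hc2def]
    push_cast
    field_simp
    ring
  clear_value c2 a b
  obtain ⟨t, htdef⟩ : ∃ t : ℚ, t = a / (k * b) := ⟨_, rfl⟩
  refine ⟨t, ?_, ?_, ?_, ?_⟩
  · rw [hA, hB, htdef]; push_cast; ring
  · rw [htdef]; exact div_pos hapos hkbpos
  · rw [htdef]; exact (div_lt_one hkbpos).2 hlt
  · have hkey : (a : ℝ) = (k : ℝ) * (t : ℝ) * (b : ℝ) := by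
      have : k * t * b = a := by
        rw [htdef]; field_simp
      exact_mod_cast this.symm
    have hI1 : IntervalIntegrable
        (fun z => (1 - z) * (((k : ℝ) + 1) + ((k : ℝ) - 1) * z) ^ dN)
        MeasureTheory.volume (-1 : ℝ) 1 :=
      Continuous.intervalIntegrable (by fun_prop) _ _
    have hI2 : IntervalIntegrable
        (fun z => (1 + z) * (((k : ℝ) + 1) + ((k : ℝ) - 1) * z) ^ dN)
        MeasureTheory.volume (-1 : ℝ) 1 :=
      Continuous.intervalIntegrable (by fun_prop) _ _
    have hfun : (fun z : ℝ => ((1 - (k : ℝ) * t) - (1 + (k : ℝ) * t) * z) *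
          (((k : ℝ) * t + t) + ((k : ℝ) * t - t) * z) ^ dN)
        = fun z : ℝ => (t:ℝ)^dN * ((1 - z) * (((k : ℝ) + 1) + ((k : ℝ) - 1) * z) ^ dN)
          - ((t:ℝ)^dN * ((k:ℝ) * t)) * ((1 + z) * (((k : ℝ) + 1) + ((k : ℝ) - 1) * z) ^ dN) := by
      funext z
      rw [show ((k:ℝ) * t + t) + ((k:ℝ) * t - t) * z
          = (t:ℝ) * (((k:ℝ) + 1) + ((k:ℝ) - 1) * z) from by ring, mul_pow]
      ring
    rw [hfun, intervalIntegral.integral_sub (hI1.const_mul _) (hI2.const_mul _),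
      intervalIntegral.integral_const_mul, intervalIntegral.integral_const_mul, hA, hB]
    linear_combination ((t:ℝ))^dN * hkey
end
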